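/- For arbitrary strict partitions λ and μ (not necessarily satisfying μ ⊆ λ), one has |λ| − |μ| = Σ_{k ∈ W^B(μ,λ)} x_k^B, where for the strict partition λ one defines the integers x_k^B = λ_k for 1 ≤ k ≤ ℓ(λ) and x_k^B = λ'_k − k for k > ℓ(λ). -/

import Mathlib

attribute [local instance] Classical.propDecidable

/-- `l : ℕ → ℕ` encodes a strict partition: the parts are `l 1 > l 2 > ⋯ > l ℓ > 0`
(indexed from `1`), with `l i = 0` for `i > ℓ` (and `l 0 = 0` by convention). -/
def IsStrictPartition (l : ℕ → ℕ) : Prop :=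
  l 0 = 0 ∧ ∀ i, 1 ≤ i → (l i = 0 → l (i + 1) = 0) ∧ (l i ≠ 0 → l (i + 1) < l i)

/-- The shifted diagram of type B: cells `(i,j)` with `1 ≤ i ≤ ℓ(λ)` and
`i ≤ j ≤ λ_i + i - 1`.  (For a strict partition all such cells satisfy
`i ≤ l 1` and `j ≤ 2 * l 1 + 2`, so the ambient box loses nothing.) -/
noncomputable def cellsB (l : ℕ → ℕ) : Finset (ℕ × ℕ) :=
  (Finset.Icc 1 (l 1) ×ˢ Finset.Icc 1 (2 * l 1 + 2)).filter
    (fun p => p.1 ≤ p.2 ∧ p.2 < l p.1 + p.1)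

/-- The shifted diagram of type D: cells `(i,j)` with `1 ≤ i ≤ ℓ(λ)` and
`i + 1 ≤ j ≤ λ_i + i`. -/
noncomputable def cellsD (l : ℕ → ℕ) : Finset (ℕ × ℕ) :=
  (Finset.Icc 1 (l 1) ×ˢ Finset.Icc 1 (2 * l 1 + 2)).filter
    (fun p => p.1 < p.2 ∧ p.2 ≤ l p.1 + p.1)

/-- `λ'_k`: the number of cells of `[λ]^B` in column `k`. -/
noncomputable def colB (l : ℕ → ℕ) (k : ℕ) : ℕ :=
  ((cellsB l).filter (fun p => p.2 = k)).card

/-- The size `|λ|` of a strict partition. -/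
noncomputable def spSize (l : ℕ → ℕ) : ℕ := ∑ i ∈ Finset.Icc 1 (l 1), l i

/-- The length `ℓ(λ)` (number of nonzero parts) of a strict partition. -/
noncomputable def spLength (l : ℕ → ℕ) : ℕ :=
  ((Finset.Icc 1 (l 1)).filter (fun i => l i ≠ 0)).card

/-- `μ ⋖ ν` for strict partitions (containment via type B diagrams and `|ν| = |μ| + 1`). -/
def CoversB (m n : ℕ → ℕ) : Prop :=
  cellsB m ⊆ cellsB n ∧ spSize n = spSize m + 1

/-- `μ ⋖ ν` for strict partitions (containment via type D diagrams and `|ν| = |μ| + 1`). -/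
def CoversD (m n : ℕ → ℕ) : Prop :=
  cellsD m ⊆ cellsD n ∧ spSize n = spSize m + 1

/-- An excited move of type B with respect to `λ`. -/
def ExcitedMoveB (l : ℕ → ℕ) (D D' : Finset (ℕ × ℕ)) : Prop :=
  ∃ i j : ℕ, (i, j) ∈ D ∧
    (i + 1, j) ∈ cellsB l ∧ (i + 1, j) ∉ D ∧
    (i, j + 1) ∈ cellsB l ∧ (i, j + 1) ∉ D ∧
    (i + 1, j + 1) ∈ cellsB l ∧ (i + 1, j + 1) ∉ D ∧
    D' = insert (i + 1, j + 1) (D.erase (i, j))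

/-- The excited diagrams of type B of shape `λ/μ`: subsets of `[λ]^B` obtainable from
`[μ]^B` by finite sequences of excited moves of type B. -/
noncomputable def EB (l m : ℕ → ℕ) : Finset (Finset (ℕ × ℕ)) :=
  (cellsB l).powerset.filter
    (fun D => Relation.ReflTransGen (ExcitedMoveB l) (cellsB m) D)

/-- An excited move of type D with respect to `λ`. -/
def ExcitedMoveD (l : ℕ → ℕ) (D D' : Finset (ℕ × ℕ)) : Prop :=
  (∃ i j : ℕ, i + 1 < j ∧ (i, j) ∈ D ∧
    (i + 1, j) ∈ cellsD l ∧ (i + 1, j) ∉ D ∧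
    (i, j + 1) ∈ cellsD l ∧ (i, j + 1) ∉ D ∧
    (i + 1, j + 1) ∈ cellsD l ∧ (i + 1, j + 1) ∉ D ∧
    D' = insert (i + 1, j + 1) (D.erase (i, j))) ∨
  (∃ i : ℕ, (i, i + 1) ∈ D ∧
    (i, i + 2) ∈ cellsD l ∧ (i, i + 2) ∉ D ∧
    (i, i + 3) ∈ cellsD l ∧ (i, i + 3) ∉ D ∧
    (i + 1, i + 2) ∈ cellsD l ∧ (i + 1, i + 2) ∉ D ∧
    (i + 1, i + 3) ∈ cellsD l ∧ (i + 1, i + 3) ∉ D ∧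
    (i + 2, i + 3) ∈ cellsD l ∧ (i + 2, i + 3) ∉ D ∧
    D' = insert (i + 2, i + 3) (D.erase (i, i + 1)))

/-- The excited diagrams of type D of shape `λ/μ`. -/
noncomputable def ED (l m : ℕ → ℕ) : Finset (Finset (ℕ × ℕ)) :=
  (cellsD l).powerset.filter
    (fun D => Relation.ReflTransGen (ExcitedMoveD l) (cellsD m) D)

/-- The set `W^B(μ, λ)`: all `1 ≤ k ≤ ℓ(λ)` with `λ_k ≠ μ_i` for all `i ≥ 1`, together
with all `k ≥ ℓ(λ) + 1` with `λ'_k - k ≠ μ'_i - i` for all `i ≥ 1`.  (All its elements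
are at most `λ_1 + μ_1 + 2`, so the ambient interval loses nothing.) -/
noncomputable def WB (m l : ℕ → ℕ) : Finset ℕ :=
  (Finset.Icc 1 (l 1 + m 1 + 2)).filter (fun k =>
    (k ≤ spLength l ∧ ∀ i, 1 ≤ i → l k ≠ m i) ∨
    (spLength l + 1 ≤ k ∧ ∀ i, 1 ≤ i → (colB l k : ℤ) - k ≠ (colB m i : ℤ) - i))

/-- The set `W^D(μ, λ)`. -/
noncomputable def WD (m l : ℕ → ℕ) : Finset ℕ :=
  (Finset.Icc 1 (l 1 + m 1 + 3)).filter (fun k =>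
    (k ≤ spLength l ∧ ∀ i, 1 ≤ i → l k ≠ m i) ∨
    (k = spLength l + 1 ∧ Odd ((spLength l : ℤ) - (spLength m : ℤ))) ∨
    (spLength l + 2 ≤ k ∧ ∀ i, 1 ≤ i → (colB l k : ℤ) - k ≠ (colB m i : ℤ) - i))

/-- The type B hook length of a cell of `[λ]^B`. -/
noncomputable def hB (l : ℕ → ℕ) (p : ℕ × ℕ) : ℤ :=
  if p.1 = p.2 then (l p.1 : ℤ)
  else if p.2 ≤ spLength l then (l p.1 : ℤ) + (l p.2 : ℤ)
  else ((l p.1 : ℤ) + (p.1 : ℤ) - (p.2 : ℤ)) + ((colB l p.2 : ℤ) - (p.1 : ℤ))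

/-- The type D hook length of a cell of `[λ]^D`. -/
noncomputable def hD (l : ℕ → ℕ) (p : ℕ × ℕ) : ℤ :=
  if p.2 ≤ spLength l then (l p.1 : ℤ) + (l p.2 : ℤ)
  else ((l p.1 : ℤ) + (p.1 : ℤ) - (p.2 : ℤ) + 1) + ((colB l (p.2 - 1) : ℤ) - (p.1 : ℤ))

/-- A standard Young tableau on a finite set of cells, encoded as `T : ℕ × ℕ → ℕ`
which is `0` off the cells and restricts to a bijection onto `{1, …, n}`,
increasing along rows and columns. -/
def IsSYT (cells : Finset (ℕ × ℕ)) (T : ℕ × ℕ → ℕ) : Prop :=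
  Set.BijOn T ↑cells ↑(Finset.Icc 1 cells.card) ∧
  (∀ p, p ∉ cells → T p = 0) ∧
  (∀ i j : ℕ, (i, j) ∈ cells → (i, j + 1) ∈ cells → T (i, j) < T (i, j + 1)) ∧
  (∀ i j : ℕ, (i, j) ∈ cells → (i + 1, j) ∈ cells → T (i, j) < T (i + 1, j))

/-- The skew diagram `[λ]^B ∖ [μ]^B`. -/
noncomputable def skewB (l m : ℕ → ℕ) : Finset (ℕ × ℕ) := cellsB l \ cellsB m

/-- The skew diagram `[λ]^D ∖ [μ]^D`. -/
noncomputable def skewD (l m : ℕ → ℕ) : Finset (ℕ × ℕ) := cellsD l \ cellsD m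

/-- `f^{λ/μ}`: the number of standard Young tableaux of shifted skew shape `λ/μ`
(type B diagrams). -/
noncomputable def fB (l m : ℕ → ℕ) : ℕ :=
  Nat.card {T : ℕ × ℕ → ℕ // IsSYT (skewB l m) T}

/-- `f^{λ/μ}` via the type D diagrams. -/
noncomputable def fD (l m : ℕ → ℕ) : ℕ :=
  Nat.card {T : ℕ × ℕ → ℕ // IsSYT (skewD l m) T}

/-- `x_k^B = λ_k` for `k ≤ ℓ(λ)` and `x_k^B = λ'_k - k` for `k > ℓ(λ)`. -/
noncomputable def xB (l : ℕ → ℕ) (k : ℕ) : ℤ :=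
  if k ≤ spLength l then (l k : ℤ) else (colB l k : ℤ) - (k : ℤ)

/-- `x_k^D = λ_k` for `k ≤ ℓ(λ)` and `x_k^D = λ'_{k-1} - k + 1` for `k > ℓ(λ)`. -/
noncomputable def xD (l : ℕ → ℕ) (k : ℕ) : ℤ :=
  if k ≤ spLength l then (l k : ℤ) else (colB l (k - 1) : ℤ) - (k : ℤ) + 1

/-- The weighted type B hook length `h^B(u; z)`: the sum of `z_{c(v)}` over the cells `v`
of the type B hook of `u` (the diagonal cell `(j,j)` counted twice when `i < j ≤ ℓ(λ)`). -/
noncomputable def hBz (l : ℕ → ℕ) (z : ℕ → ℝ) (u : ℕ × ℕ) : ℝ :=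
  (∑ p ∈ (cellsB l).filter (fun p => p.1 = u.1 ∧ u.2 ≤ p.2), z (p.2 - p.1)) +
  (∑ p ∈ (cellsB l).filter (fun p => p.2 = u.2 ∧ u.1 < p.1), z (p.2 - p.1)) +
  (if u.1 < u.2 ∧ u.2 ≤ spLength l then
      ∑ p ∈ (cellsB l).filter (fun p => p.1 = u.2), z (p.2 - p.1)
    else 0)

/-- The weighted type D hook length `h^D(u; z)`. -/
noncomputable def hDz (l : ℕ → ℕ) (z : ℕ → ℝ) (u : ℕ × ℕ) : ℝ :=
  (∑ p ∈ (cellsD l).filter (fun p => p.1 = u.1 ∧ u.2 ≤ p.2), z (p.2 - p.1)) +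
  (∑ p ∈ (cellsD l).filter (fun p => p.2 = u.2 ∧ u.1 < p.1), z (p.2 - p.1)) +
  (∑ p ∈ (cellsD l).filter (fun p => p.1 = u.2), z (p.2 - p.1))

/-- The weight `T_z` of a standard Young tableau `T` on `cells` (with `n = |cells|`):
`∏_{k=1}^n (z_{c(T⁻¹(n))} + ⋯ + z_{c(T⁻¹(k))})⁻¹`. -/
noncomputable def Tz (cells : Finset (ℕ × ℕ)) (z : ℕ → ℝ) (T : ℕ × ℕ → ℕ) : ℝ :=
  ∏ k ∈ Finset.Icc 1 cells.card,
    (∑ p ∈ cells.filter (fun p => k ≤ T p), z (p.2 - p.1))⁻¹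

/-- `x_k^B(z) = z_0 + ⋯ + z_{λ_k - 1}` for `k ≤ ℓ(λ)`, and
`x_k^B(z) = -(z_0 + ⋯ + z_{k - λ'_k - 1})` for `k > ℓ(λ)`. -/
noncomputable def xBz (l : ℕ → ℕ) (z : ℕ → ℝ) (k : ℕ) : ℝ :=
  if k ≤ spLength l then ∑ t ∈ Finset.range (l k), z t
  else -∑ t ∈ Finset.range (k - colB l k), z t


section SP2aux
open Finset

/-- A downward-closed finite set of positive integers is `Icc 1 card`. -/
lemma sp2_dc_card {S : Finset ℕ} (h0 : 0 ∉ S)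
    (hdc : ∀ i j, 1 ≤ i → i ≤ j → j ∈ S → i ∈ S) :
    ∀ i, 1 ≤ i → (i ∈ S ↔ i ≤ S.card) := by
  intro i hi
  constructor
  · intro hiS
    have hsub : Finset.Icc 1 i ⊆ S := by
      intro j hj
      rw [Finset.mem_Icc] at hj
      exact hdc j i hj.1 hj.2 hiS
    calc i = (Finset.Icc 1 i).card := by simp
    _ ≤ S.card := Finset.card_le_card hsub
  · intro hc
    by_contra hiS
    have hsub : S ⊆ Finset.Icc 1 (i - 1) := by
      intro j hj
      rw [Finset.mem_Icc]
      have hj1 : 1 ≤ j := Nat.one_le_iff_ne_zero.mpr (fun h => h0 (h ▸ hj))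
      refine ⟨hj1, ?_⟩
      by_contra hji
      exact hiS (hdc i j hi (by omega) hj)
    have := Finset.card_le_card hsub
    simp only [Nat.card_Icc] at this
    omega

variable {l : ℕ → ℕ}

lemma sp2_zero_mono (hl : IsStrictPartition l) :
    ∀ i j, 1 ≤ i → i ≤ j → l i = 0 → l j = 0 := by
  intro i j hi hij h0
  induction j, hij using Nat.le_induction with
  | base => exact h0
  | succ j hij ih => exact ((hl.2 j (by omega)).1 ih)

lemma sp2_add_mono (hl : IsStrictPartition l) :
    ∀ i j, 1 ≤ i → i ≤ j → l j ≠ 0 → l j + j ≤ l i + i := by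
  intro i j hi hij hne
  induction j, hij using Nat.le_induction with
  | base => omega
  | succ j hij ih =>
    have hj : l j ≠ 0 := by
      intro h; exact hne ((hl.2 j (by omega)).1 h)
    have := (hl.2 j (by omega)).2 hj
    have := ih hj
    omega

lemma sp2_length_spec (hl : IsStrictPartition l) :
    ∀ k, 1 ≤ k → (l k ≠ 0 ↔ k ≤ spLength l) := by
  intro k hk
  set S := (Finset.Icc 1 (l 1)).filter (fun i => l i ≠ 0) with hS
  have h0 : 0 ∉ S := by simp [hS]
  have hdc : ∀ i j, 1 ≤ i → i ≤ j → j ∈ S → i ∈ S := by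
    intro i j hi hij hjS
    simp only [hS, Finset.mem_filter, Finset.mem_Icc] at hjS ⊢
    refine ⟨⟨hi, le_trans hij hjS.1.2⟩, ?_⟩
    intro h
    exact hjS.2 (sp2_zero_mono hl i j hi hij h)
  have key := sp2_dc_card h0 hdc k hk
  have hcard : S.card = spLength l := rfl
  rw [hcard] at key
  rw [← key]
  simp only [hS, Finset.mem_filter, Finset.mem_Icc]
  constructor
  · intro h
    refine ⟨⟨hk, ?_⟩, h⟩
    have := sp2_add_mono hl 1 k le_rfl hk h
    omega
  · exact fun h => h.2

lemma sp2_length_le (hl : IsStrictPartition l) : spLength l ≤ l 1 := by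
  by_cases h : spLength l = 0
  · omega
  · have h1 : 1 ≤ spLength l := by omega
    have := (sp2_length_spec hl (spLength l) h1).mpr le_rfl
    have := sp2_add_mono hl 1 (spLength l) le_rfl h1 this
    omega

lemma sp2_mem_cellsB (hl : IsStrictPartition l) (i j : ℕ) :
    (i, j) ∈ cellsB l ↔ 1 ≤ i ∧ i ≤ j ∧ j < l i + i := by
  unfold cellsB
  simp only [Finset.mem_filter, Finset.mem_product, Finset.mem_Icc]
  constructor
  · rintro ⟨⟨⟨h1, _⟩, _⟩, h5, h6⟩; exact ⟨h1, h5, h6⟩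
  · rintro ⟨h1, h2, h3⟩
    have hli : l i ≠ 0 := by omega
    have h4 := sp2_add_mono hl 1 i le_rfl h1 hli
    omega

lemma sp2_colB_eq (hl : IsStrictPartition l) (k : ℕ) :
    colB l k = ((Finset.Icc 1 k).filter (fun i => k < l i + i)).card := by
  unfold colB
  have himg : (cellsB l).filter (fun p => p.2 = k)
      = ((Finset.Icc 1 k).filter (fun i => k < l i + i)).image (fun i => (i, k)) := by
    ext ⟨a, b⟩
    simp only [Finset.mem_filter, Finset.mem_image, Finset.mem_Icc]
    constructor
    · rintro ⟨hmem, hb⟩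
      rw [sp2_mem_cellsB hl] at hmem
      exact ⟨a, ⟨⟨hmem.1, hb ▸ hmem.2.1⟩, hb ▸ hmem.2.2⟩, by rw [hb]⟩
    · rintro ⟨i, ⟨⟨hi1, hik⟩, hlt⟩, heq⟩
      have ha : i = a := congrArg Prod.fst heq
      have hb : k = b := congrArg Prod.snd heq
      subst ha; subst hb
      exact ⟨(sp2_mem_cellsB hl i k).mpr ⟨hi1, hik, hlt⟩, rfl⟩
  rw [himg, Finset.card_image_of_injective]
  intro a b h
  simpa using h

lemma sp2_colB_gap (hl : IsStrictPartition l) (k : ℕ) :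
    ∀ i, 1 ≤ i → (i ≤ colB l k ↔ (i ≤ k ∧ k < l i + i)) := by
  intro i hi
  set S := (Finset.Icc 1 k).filter (fun i => k < l i + i) with hS
  have h0 : 0 ∉ S := by simp [hS]
  have hdc : ∀ i j, 1 ≤ i → i ≤ j → j ∈ S → i ∈ S := by
    intro i j hi hij hjS
    simp only [hS, Finset.mem_filter, Finset.mem_Icc] at hjS ⊢
    obtain ⟨⟨hj1, hjk⟩, hjlt⟩ := hjS
    have hlj : l j ≠ 0 := by omega
    have := sp2_add_mono hl i j hi hij hlj
    exact ⟨⟨hi, le_trans hij hjk⟩, by omega⟩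
  have key := sp2_dc_card h0 hdc i hi
  rw [sp2_colB_eq hl, ← key]
  simp only [hS, Finset.mem_filter, Finset.mem_Icc]
  constructor
  · rintro ⟨⟨_, h2⟩, h3⟩; exact ⟨h2, h3⟩
  · rintro ⟨h2, h3⟩; exact ⟨⟨hi, h2⟩, h3⟩

lemma sp2_colB_le_k (hl : IsStrictPartition l) (k : ℕ) : colB l k ≤ k := by
  rw [sp2_colB_eq hl]
  calc ((Finset.Icc 1 k).filter (fun i => k < l i + i)).card
      ≤ (Finset.Icc 1 k).card := Finset.card_filter_le _ _
  _ = k := by simp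

lemma sp2_colB_le_length (hl : IsStrictPartition l) (k : ℕ) :
    colB l k ≤ spLength l := by
  by_cases h : colB l k = 0
  · omega
  · have h1 : 1 ≤ colB l k := by omega
    have := (sp2_colB_gap hl k (colB l k) h1).mp le_rfl
    have hne : l (colB l k) ≠ 0 := by omega
    exact (sp2_length_spec hl _ h1).mp hne

lemma sp2_colB_self (hl : IsStrictPartition l) (k : ℕ) (hk : k ≤ spLength l) :
    colB l k = k := by
  by_cases h0 : k = 0
  · subst h0
    have := sp2_colB_le_k hl 0
    omega
  · have h1 : 1 ≤ k := by omega
    have hne : l k ≠ 0 := (sp2_length_spec hl k h1).mpr hk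
    have := (sp2_colB_gap hl k k h1).mpr ⟨le_rfl, by omega⟩
    have := sp2_colB_le_k hl k
    omega

lemma sp2_colB_anti (hl : IsStrictPartition l) {k1 k2 : ℕ}
    (h1 : spLength l ≤ k1) (h : k1 ≤ k2) : colB l k2 ≤ colB l k1 := by
  rw [sp2_colB_eq hl, sp2_colB_eq hl]
  apply Finset.card_le_card
  intro i hi
  simp only [Finset.mem_filter, Finset.mem_Icc] at hi ⊢
  obtain ⟨⟨hi1, hik⟩, hlt⟩ := hi
  have hli : l i ≠ 0 := by omega
  have hiL : i ≤ spLength l := (sp2_length_spec hl i hi1).mp hli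
  exact ⟨⟨hi1, by omega⟩, by omega⟩

/-- Fact F, forward: for `k > ℓ(λ)`, `k - λ'_k` is not a part of `λ`. -/
lemma sp2_notPart (hl : IsStrictPartition l) (k : ℕ) (hk : spLength l + 1 ≤ k) :
    ∀ j, 1 ≤ j → l j ≠ k - colB l k := by
  intro j hj heq
  set r := colB l k with hr
  have hrL : r ≤ spLength l := sp2_colB_le_length hl k
  have hc1 : 1 ≤ k - r := by omega
  have hlj : l j ≠ 0 := by omega
  have hjL : j ≤ spLength l := (sp2_length_spec hl j hj).mp hlj
  by_cases hcase : j ≤ r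
  · have := (sp2_colB_gap hl k j hj).mp (by omega)
    omega
  · have hnot : ¬ (j ≤ k ∧ k < l j + j) := by
      intro hcontra
      have := (sp2_colB_gap hl k j hj).mpr hcontra
      omega
    have hjk : j ≤ k := by omega
    have : l j + j ≤ k := by
      by_contra hx
      exact hnot ⟨hjk, by omega⟩
    omega

/-- Fact F, converse: if `c ≥ 1` is not a part of `λ`, there is `k > ℓ(λ)`
with `k - λ'_k = c`, namely `k = c + r` where `r = #{i : λ_i > c}`. -/
lemma sp2_exPart (hl : IsStrictPartition l) (c : ℕ) (hc : 1 ≤ c)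
    (hnp : ∀ j, 1 ≤ j → l j ≠ c) :
    ∃ r, r ≤ spLength l ∧ colB l (c + r) = r ∧ spLength l + 1 ≤ c + r := by
  set S := (Finset.Icc 1 (spLength l)).filter (fun i => c < l i) with hS
  set r := S.card with hrdef
  have h0 : 0 ∉ S := by simp [hS]
  have hdc : ∀ i j, 1 ≤ i → i ≤ j → j ∈ S → i ∈ S := by
    intro i j hi hij hjS
    simp only [hS, Finset.mem_filter, Finset.mem_Icc] at hjS ⊢
    obtain ⟨⟨hj1, hjL⟩, hjc⟩ := hjS
    have := sp2_add_mono hl i j hi hij (by omega)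
    exact ⟨⟨hi, le_trans hij hjL⟩, by omega⟩
  have hchar := sp2_dc_card h0 hdc
  have hrL : r ≤ spLength l := by
    calc S.card ≤ (Finset.Icc 1 (spLength l)).card := Finset.card_filter_le _ _
    _ = spLength l := by simp
  have hmemS : ∀ i, 1 ≤ i → (i ∈ S ↔ (i ≤ spLength l ∧ c < l i)) := by
    intro i hi
    simp only [hS, Finset.mem_filter, Finset.mem_Icc]
    constructor
    · rintro ⟨⟨_, h2⟩, h3⟩; exact ⟨h2, h3⟩
    · rintro ⟨h2, h3⟩; exact ⟨⟨hi, h2⟩, h3⟩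
  -- colB l (c + r) = r
  have hge : r ≤ colB l (c + r) := by
    by_cases hr0 : r = 0
    · omega
    · have hr1 : 1 ≤ r := by omega
      have hrS : r ∈ S := (hchar r hr1).mpr le_rfl
      have := (hmemS r hr1).mp hrS
      exact (sp2_colB_gap hl (c + r) r hr1).mpr ⟨by omega, by omega⟩
  have hle : colB l (c + r) ≤ r := by
    by_contra hx
    have hr1 : 1 ≤ r + 1 := by omega
    have := (sp2_colB_gap hl (c + r) (r + 1) hr1).mp (by omega)
    have hlr1 : c ≤ l (r + 1) := by omega
    have hner : l (r + 1) ≠ 0 := by omega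
    have hr1L : r + 1 ≤ spLength l := (sp2_length_spec hl (r + 1) hr1).mp hner
    have hnotS : (r + 1) ∉ S := by
      intro hmem
      have := (hchar (r + 1) hr1).mp hmem
      omega
    have : ¬ (r + 1 ≤ spLength l ∧ c < l (r + 1)) := by
      intro hcontra
      exact hnotS ((hmemS (r + 1) hr1).mpr hcontra)
    have hlec : l (r + 1) ≤ c := by omega
    have : l (r + 1) = c := by omega
    exact hnp (r + 1) hr1 this
  refine ⟨r, hrL, by omega, ?_⟩
  -- spLength l + 1 ≤ c + r
  by_cases hcase : r = spLength l
  · omega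
  · have hr1 : 1 ≤ r + 1 := by omega
    have hr1L : r + 1 ≤ spLength l := by omega
    have hner : l (r + 1) ≠ 0 := (sp2_length_spec hl (r + 1) hr1).mpr hr1L
    have hnotS : (r + 1) ∉ S := by
      intro hmem
      have := (hchar (r + 1) hr1).mp hmem
      omega
    have hlec : l (r + 1) ≤ c := by
      by_contra hx
      exact hnotS ((hmemS (r + 1) hr1).mpr ⟨hr1L, by omega⟩)
    have hlne : l (r + 1) ≠ c := hnp (r + 1) hr1
    have hL1 : 1 ≤ spLength l := by omega
    have hlL : l (spLength l) ≠ 0 := (sp2_length_spec hl _ hL1).mpr le_rfl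
    have := sp2_add_mono hl (r + 1) (spLength l) hr1 hr1L hlL
    omega

/-- The parts of a strict partition as a finset. -/
noncomputable def sp2_parts (l : ℕ → ℕ) : Finset ℕ :=
  (Finset.Icc 1 (spLength l)).image l

lemma sp2_mem_parts (c : ℕ) :
    c ∈ sp2_parts l ↔ ∃ i, 1 ≤ i ∧ i ≤ spLength l ∧ l i = c := by
  unfold sp2_parts
  simp only [Finset.mem_image, Finset.mem_Icc]
  constructor
  · rintro ⟨i, ⟨h1, h2⟩, h3⟩; exact ⟨i, h1, h2, h3⟩
  · rintro ⟨i, h1, h2, h3⟩; exact ⟨i, ⟨h1, h2⟩, h3⟩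

lemma sp2_parts_pos (hl : IsStrictPartition l) (c : ℕ) (hc : c ∈ sp2_parts l) :
    1 ≤ c ∧ c ≤ l 1 := by
  rw [sp2_mem_parts] at hc
  obtain ⟨i, h1, h2, h3⟩ := hc
  have hne : l i ≠ 0 := (sp2_length_spec hl i h1).mpr h2
  have := sp2_add_mono hl 1 i le_rfl h1 hne
  omega

lemma sp2_sum_parts (hl : IsStrictPartition l) :
    ∑ c ∈ sp2_parts l, c = spSize l := by
  unfold sp2_parts spSize
  rw [Finset.sum_image]
  · apply Finset.sum_subset
    · intro i hi
      simp only [Finset.mem_Icc] at hi ⊢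
      exact ⟨hi.1, le_trans hi.2 (sp2_length_le hl)⟩
    · intro i hi hni
      simp only [Finset.mem_Icc] at hi hni
      by_contra h
      have h1 : 1 ≤ i := hi.1
      have := (sp2_length_spec hl i h1).mp h
      omega
  · intro a ha b hb hab
    simp only [Finset.mem_Icc, Finset.coe_Icc, Set.mem_Icc, Finset.mem_coe] at ha hb
    by_contra hne
    rcases Nat.lt_or_ge a b with h | h
    · have hnb : l b ≠ 0 := (sp2_length_spec hl b hb.1).mpr hb.2
      have := sp2_add_mono hl a b ha.1 (by omega) hnb
      omega
    · have hna : l a ≠ 0 := (sp2_length_spec hl a ha.1).mpr ha.2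
      have := sp2_add_mono hl b a hb.1 (by omega) hna
      omega


lemma sp2_part_inj (hl : IsStrictPartition l) {i j : ℕ} (hi : 1 ≤ i)
    (hiL : i ≤ spLength l) (hj : 1 ≤ j) (hjL : j ≤ spLength l) (he : l i = l j) :
    i = j := by
  by_contra hne
  rcases Nat.lt_or_ge i j with h | h
  · have := sp2_add_mono hl i j hi (by omega) ((sp2_length_spec hl j hj).mpr hjL)
    omega
  · have := sp2_add_mono hl j i hj (by omega) ((sp2_length_spec hl i hi).mpr hiL)
    omega

lemma sp2_not_mem_length {l : ℕ → ℕ} (hl : IsStrictPartition l) {i : ℕ}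
    (hi : 1 ≤ i) (h : ¬ i ≤ spLength l) : l i = 0 := by
  by_contra hx
  exact h ((sp2_length_spec hl i hi).mp hx)

/-- Lemma 3 (type B): `|λ| - |μ| = ∑_{k ∈ W^B(μ,λ)} x_k^B`. -/
theorem statement2 (l m : ℕ → ℕ) (hl : IsStrictPartition l) (hm : IsStrictPartition m) :
    (spSize l : ℤ) - (spSize m : ℤ) = ∑ k ∈ WB m l, xB l k := by
  classical
  set N := l 1 + m 1 + 2 with hN
  set A := (Finset.Icc 1 N).filter
    (fun k => k ≤ spLength l ∧ ∀ i, 1 ≤ i → l k ≠ m i) with hAdef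
  set B := (Finset.Icc 1 N).filter
    (fun k => spLength l + 1 ≤ k ∧
      ∀ i, 1 ≤ i → (colB l k : ℤ) - (k : ℤ) ≠ (colB m i : ℤ) - (i : ℤ)) with hBdef
  have hsplit : WB m l = A ∪ B := by
    ext k
    simp only [WB, hAdef, hBdef, Finset.mem_filter, Finset.mem_union]
    tauto
  have hdisj : Disjoint A B := by
    rw [Finset.disjoint_left]
    intro k hk1 hk2
    simp only [hAdef, hBdef, Finset.mem_filter] at hk1 hk2
    omega
  have hLl1 : spLength l ≤ l 1 := sp2_length_le hl
  -- A-sum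
  have hA : ∑ k ∈ A, xB l k = ∑ c ∈ sp2_parts l \ sp2_parts m, (c : ℤ) := by
    apply Finset.sum_bij (fun k _ => l k)
    · intro k hk
      simp only [hAdef, Finset.mem_filter, Finset.mem_Icc] at hk
      obtain ⟨⟨hk1, hkN⟩, hkL, hcond⟩ := hk
      rw [Finset.mem_sdiff]
      constructor
      · rw [sp2_mem_parts]; exact ⟨k, hk1, hkL, rfl⟩
      · rw [sp2_mem_parts]
        rintro ⟨i, hi1, hiM, hie⟩
        exact hcond i hi1 hie.symm
    · intro k1 h1 k2 h2 heq
      simp only [hAdef, Finset.mem_filter, Finset.mem_Icc] at h1 h2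
      exact sp2_part_inj hl h1.1.1 h1.2.1 h2.1.1 h2.2.1 heq
    · intro c hc
      rw [Finset.mem_sdiff, sp2_mem_parts] at hc
      obtain ⟨⟨k, hk1, hkL, hke⟩, hcm⟩ := hc
      have hc1 : 1 ≤ c := by
        have := (sp2_length_spec hl k hk1).mpr hkL
        omega
      refine ⟨k, ?_, hke⟩
      simp only [hAdef, Finset.mem_filter, Finset.mem_Icc]
      refine ⟨⟨hk1, by omega⟩, hkL, ?_⟩
      intro i hi1 hie
      by_cases hiM : i ≤ spLength m
      · exact hcm ((sp2_mem_parts _).mpr ⟨i, hi1, hiM, by omega⟩)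
      · have := sp2_not_mem_length hm hi1 hiM
        omega
    · intro k hk
      simp only [hAdef, Finset.mem_filter, Finset.mem_Icc] at hk
      unfold xB
      rw [if_pos hk.2.1]
  -- B-sum
  have hB : ∑ k ∈ B, xB l k = ∑ c ∈ sp2_parts m \ sp2_parts l, (-(c : ℤ)) := by
    apply Finset.sum_bij (fun k _ => k - colB l k)
    · intro k hk
      simp only [hBdef, Finset.mem_filter, Finset.mem_Icc] at hk
      obtain ⟨⟨hk1, hkN⟩, hkL, hcond⟩ := hk
      have hrL : colB l k ≤ spLength l := sp2_colB_le_length hl k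
      have hc1 : 1 ≤ k - colB l k := by omega
      rw [Finset.mem_sdiff]
      constructor
      · by_contra hcm
        have hnp : ∀ j, 1 ≤ j → m j ≠ k - colB l k := by
          intro j hj1 hje
          by_cases hjM : j ≤ spLength m
          · exact hcm ((sp2_mem_parts _).mpr ⟨j, hj1, hjM, hje⟩)
          · have := sp2_not_mem_length hm hj1 hjM
            omega
        obtain ⟨r', hr'M, hcol, hge⟩ := sp2_exPart hm (k - colB l k) hc1 hnp
        have hne := hcond (k - colB l k + r') (by omega)
        rw [hcol] at hne
        apply hne
        push_cast
        omega
      · rw [sp2_mem_parts]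
        rintro ⟨j, hj1, hjL, hje⟩
        exact sp2_notPart hl k hkL j hj1 hje
    · intro k1 h1 k2 h2 heq
      simp only [hBdef, Finset.mem_filter, Finset.mem_Icc] at h1 h2
      have hr1 : colB l k1 ≤ spLength l := sp2_colB_le_length hl k1
      have hr2 : colB l k2 ≤ spLength l := sp2_colB_le_length hl k2
      rcases le_total k1 k2 with h | h
      · have := sp2_colB_anti hl (by omega : spLength l ≤ k1) h
        omega
      · have := sp2_colB_anti hl (by omega : spLength l ≤ k2) h
        omega
    · intro c hc
      rw [Finset.mem_sdiff] at hc
      obtain ⟨hcm, hcl⟩ := hc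
      obtain ⟨hc1, hcm1⟩ := sp2_parts_pos hm c hcm
      have hnp : ∀ j, 1 ≤ j → l j ≠ c := by
        intro j hj1 hje
        by_cases hjL : j ≤ spLength l
        · exact hcl ((sp2_mem_parts _).mpr ⟨j, hj1, hjL, hje⟩)
        · have := sp2_not_mem_length hl hj1 hjL
          omega
      obtain ⟨r, hrL, hcol, hge⟩ := sp2_exPart hl c hc1 hnp
      refine ⟨c + r, ?_, by rw [hcol]; omega⟩
      simp only [hBdef, Finset.mem_filter, Finset.mem_Icc]
      refine ⟨⟨by omega, by omega⟩, hge, ?_⟩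
      intro i hi1
      rw [hcol]
      by_cases hiM : i ≤ spLength m
      · rw [sp2_colB_self hm i hiM]
        push_cast
        omega
      · have hiM1 : spLength m + 1 ≤ i := by omega
        have hri : colB m i ≤ spLength m := sp2_colB_le_length hm i
        intro heq
        have hceq : c = i - colB m i := by
          push_cast at heq
          omega
        obtain ⟨j, hj1, hjM, hje⟩ := (sp2_mem_parts c).mp hcm
        exact sp2_notPart hm i hiM1 j hj1 (by omega)
    · intro k hk
      simp only [hBdef, Finset.mem_filter, Finset.mem_Icc] at hk
      have hrk : colB l k ≤ k := sp2_colB_le_k hl k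
      unfold xB
      rw [if_neg (by omega)]
      omega
  rw [hsplit, Finset.sum_union hdisj, hA, hB]
  have hsl : ((spSize l : ℕ) : ℤ) = ∑ c ∈ sp2_parts l, (c : ℤ) := by
    rw [← sp2_sum_parts hl]
    push_cast
    rfl
  have hsm : ((spSize m : ℕ) : ℤ) = ∑ c ∈ sp2_parts m, (c : ℤ) := by
    rw [← sp2_sum_parts hm]
    push_cast
    rfl
  have e1 : ∑ c ∈ sp2_parts l \ sp2_parts m, (c : ℤ)
      = ∑ c ∈ sp2_parts l, (c : ℤ) - ∑ c ∈ sp2_parts l ∩ sp2_parts m, (c : ℤ) := by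
    rw [← Finset.sdiff_inter_self_left (sp2_parts l) (sp2_parts m)]
    exact Finset.sum_sdiff_eq_sub (Finset.inter_subset_left)
  have e2 : ∑ c ∈ sp2_parts m \ sp2_parts l, (c : ℤ)
      = ∑ c ∈ sp2_parts m, (c : ℤ) - ∑ c ∈ sp2_parts l ∩ sp2_parts m, (c : ℤ) := by
    rw [← Finset.sdiff_inter_self_left (sp2_parts m) (sp2_parts l),
      Finset.inter_comm (sp2_parts m) (sp2_parts l)]
    exact Finset.sum_sdiff_eq_sub
      (by rw [Finset.inter_comm]; exact Finset.inter_subset_left)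
  rw [Finset.sum_neg_distrib, e1, e2, hsl, hsm]
  ring
end SP2aux
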